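/- For a linear functional ℓ(t, x) = ⟨η, x⟩ + λ t on R × R^N with λ > 0, the minimum of ℓ over C = {(t,x) : ||x||_1 ≤ t ≤ M} (M > 0) equals min(0, M(λ - ||η||_∞)), and if ||η||_∞ > λ it is attained at (M, -M sign(η_{i*}) e_{i*}) where i* maximizes |η_i|. -/
import Mathlib


open scoped BigOperators

/-- The Frank-Wolfe linear minimization subproblem over C = {(t,x) : ‖x‖₁ ≤ t ≤ M}:
the minimum of ℓ(t,x) = ⟨η,x⟩ + λt equals min(0, M(λ - ‖η‖_∞)), attained, when ‖η‖_∞ > λ,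
at (M, -M·sign(η_{i*})·e_{i*}) for i* maximizing |η_i|. -/
theorem linear_subproblem_over_cone (N : ℕ) (η : Fin N → ℝ) (lam M : ℝ)
    (hlam : 0 < lam) (hM : 0 < M)
    (i₀ : Fin N) (hi₀ : ∀ i, |η i| ≤ |η i₀|)
    (C : Set (ℝ × (Fin N → ℝ)))
    (hC : C = {p | (∑ i, |p.2 i|) ≤ p.1 ∧ p.1 ≤ M})
    (l : ℝ × (Fin N → ℝ) → ℝ)
    (hl : ∀ p, l p = (∑ i, η i * p.2 i) + lam * p.1) :
    IsLeast (l '' C) (min 0 (M * (lam - |η i₀|))) ∧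
    (lam < |η i₀| →
      ((M, Pi.single i₀ (-(M * Real.sign (η i₀)))) ∈ C ∧
       l (M, Pi.single i₀ (-(M * Real.sign (η i₀)))) = min 0 (M * (lam - |η i₀|)))) := by
  subst hC
  -- lower bound
  have key : ∀ p : ℝ × (Fin N → ℝ),
      p ∈ {p : ℝ × (Fin N → ℝ) | (∑ i, |p.2 i|) ≤ p.1 ∧ p.1 ≤ M} →
      min 0 (M * (lam - |η i₀|)) ≤ l p := by
    rintro p ⟨h1, h2⟩
    rw [hl]
    have ht0 : 0 ≤ p.1 := le_trans (Finset.sum_nonneg fun i _ => abs_nonneg _) h1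
    have hs : -(|η i₀| * p.1) ≤ ∑ i, η i * p.2 i := by
      have step : ∑ i, (-(|η i₀| * |p.2 i|)) ≤ ∑ i, η i * p.2 i := by
        apply Finset.sum_le_sum
        intro i _
        nlinarith [neg_abs_le (η i * p.2 i), abs_mul (η i) (p.2 i), hi₀ i,
          abs_nonneg (p.2 i)]
      calc -(|η i₀| * p.1) ≤ -(|η i₀| * ∑ i, |p.2 i|) := by
            nlinarith [abs_nonneg (η i₀)]
        _ = ∑ i, (-(|η i₀| * |p.2 i|)) := by rw [Finset.mul_sum, ← Finset.sum_neg_distrib]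
        _ ≤ _ := step
    have hlb : (lam - |η i₀|) * p.1 ≤ (∑ i, η i * p.2 i) + lam * p.1 := by nlinarith
    rcases le_or_gt lam (|η i₀|) with h | h
    · have hmin : min 0 (M * (lam - |η i₀|)) = M * (lam - |η i₀|) :=
        min_eq_right (by nlinarith)
      rw [hmin]; nlinarith
    · have hmin : min 0 (M * (lam - |η i₀|)) = 0 := min_eq_left (by nlinarith)
      rw [hmin]; nlinarith
  -- attainment in the case lam < |η i₀|
  have hatt : lam < |η i₀| →
      ((M, Pi.single i₀ (-(M * Real.sign (η i₀)))) ∈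
        {p : ℝ × (Fin N → ℝ) | (∑ i, |p.2 i|) ≤ p.1 ∧ p.1 ≤ M} ∧
       l (M, Pi.single i₀ (-(M * Real.sign (η i₀)))) = min 0 (M * (lam - |η i₀|))) := by
    intro h
    have hne : η i₀ ≠ 0 := by
      intro h0; rw [h0] at h; simp at h; linarith
    have hsign : η i₀ * Real.sign (η i₀) = |η i₀| := by
      rcases lt_or_gt_of_ne hne with hneg | hpos
      · rw [Real.sign_of_neg hneg, abs_of_neg hneg]; ring
      · rw [Real.sign_of_pos hpos, abs_of_pos hpos]; ring
    have habs : |Real.sign (η i₀)| = 1 := by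
      rcases lt_or_gt_of_ne hne with hneg | hpos
      · rw [Real.sign_of_neg hneg]; norm_num
      · rw [Real.sign_of_pos hpos]; norm_num
    have hsum : (∑ i, |(Pi.single i₀ (-(M * Real.sign (η i₀))) : Fin N → ℝ) i|) = M := by
      rw [Finset.sum_eq_single i₀]
      · rw [Pi.single_eq_same, abs_neg, abs_mul, habs, abs_of_pos hM]; ring
      · intro i _ hi; rw [Pi.single_eq_of_ne hi]; simp
      · intro hmem; exact absurd (Finset.mem_univ i₀) hmem
    have hsum2 : (∑ i, η i * (Pi.single i₀ (-(M * Real.sign (η i₀))) : Fin N → ℝ) i)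
        = -(M * |η i₀|) := by
      rw [Finset.sum_eq_single i₀]
      · rw [Pi.single_eq_same]; nlinarith [hsign]
      · intro i _ hi; rw [Pi.single_eq_of_ne hi]; simp
      · intro hmem; exact absurd (Finset.mem_univ i₀) hmem
    refine ⟨⟨by simp [hsum], le_refl M⟩, ?_⟩
    rw [hl]; simp only [hsum2]
    rw [min_eq_right (by nlinarith)]; ring
  refine ⟨⟨?_, fun y ⟨p, hp, hy⟩ => hy ▸ key p hp⟩, hatt⟩
  rcases le_or_gt lam (|η i₀|) with h | h
  · rcases lt_or_eq_of_le h with h' | h'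
    · obtain ⟨hmem, hval⟩ := hatt h'
      exact ⟨_, hmem, hval⟩
    · refine ⟨(0, 0), ⟨by simp, le_of_lt hM⟩, ?_⟩
      rw [hl]; simp [← h']
  · refine ⟨(0, 0), ⟨by simp, le_of_lt hM⟩, ?_⟩
    rw [hl, min_eq_left (by nlinarith)]; simp
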